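/- arXiv:1711.08846 — 2 statements merged into one kernel-verified Lean document; each statement's English description precedes it below -/
import Mathlib

section
/- Let (X, d_X) be a compact metric space and A = ⊕_{k=0}^n M_{m_k}(ℂ). Let ‖·‖_𝗇 be a norm on A with constants M, N > 0 satisfying M‖·‖_𝗇 ≤ ‖·‖_A ≤ N‖·‖_𝗇, and let tr_v be the tracial state associated to v = (v_0,…,v_n) with v_k ∈ [0,1] and Σ v_k = 1. Then for the seminorm L^{(𝗇),ℂ} and all x, y ∈ X: (a) if M·diam(X,d_X) ≤ 1, then M·d_X(x,y) ≤ mk_{L^{(𝗇),ℂ}}((tr_v)_x, (tr_v)_y) ≤ N·d_X(x,y); (b) if M·diam(X,d_X) > 1, then (1/diam(X,d_X))·d_X(x,y) ≤ mk_{L^{(𝗇),ℂ}}((tr_v)_x, (tr_v)_y) ≤ N·d_X(x,y). -/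
open scoped ENNReal
set_option synthInstance.maxHeartbeats 1000000
set_option maxHeartbeats 1000000

section Defs

variable {X : Type*} [MetricSpace X] [CompactSpace X]
variable {A : Type*} [NormedRing A] [StarRing A] [CStarRing A]
  [NormedAlgebra ℂ A] [StarModule ℂ A] [CompleteSpace A]

/-- `nn` is a norm on `A` over `ℝ` (in particular, any norm over `ℂ` qualifies). -/
def IsNormOn (A : Type*) [NormedRing A] [NormedAlgebra ℂ A] (nn : A → ℝ) : Prop :=
  (∀ x, 0 ≤ nn x) ∧ (∀ x, nn x = 0 ↔ x = 0) ∧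
    (∀ x y, nn (x + y) ≤ nn x + nn y) ∧ ∀ (r : ℝ) (x : A), nn ((r : ℂ) • x) = |r| * nn x

/-- The Lipschitz-type quantity `l^{(n)}_{d_X}` on `C(X, A)`, valued in `[0,∞]`. -/
noncomputable def lipn (nn : A → ℝ) (a : C(X, A)) : ℝ≥0∞ :=
  ⨆ (p : X × X) (_ : p.1 ≠ p.2),
    ENNReal.ofReal (nn (a p.1 - a p.2) / dist p.1 p.2)

/-- The quotient norm of `C(X,A)/C(X, ℂ1_A)`. -/
noncomputable def quotCXA (a : C(X, A)) : ℝ :=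
  sInf { r : ℝ | ∃ b : C(X, A), (∀ x, ∃ c : ℂ, b x = c • (1 : A)) ∧ r = ‖a - b‖ }

/-- The quotient norm of `C(X,A)/ℂ1_{C(X,A)}`. -/
noncomputable def quotC (a : C(X, A)) : ℝ :=
  ⨅ c : ℂ, ‖a - c • (1 : C(X, A))‖

/-- The seminorm `L^{(n),C(X)}`. -/
noncomputable def LCXn (nn : A → ℝ) (a : C(X, A)) : ℝ≥0∞ :=
  max (lipn nn a) (ENNReal.ofReal (quotCXA a))

/-- The seminorm `L^{(n),ℂ}`. -/
noncomputable def LCn (nn : A → ℝ) (a : C(X, A)) : ℝ≥0∞ :=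
  max (lipn nn a) (ENNReal.ofReal (quotC a))

/-- The seminorm `L^{(n),μ}`. -/
noncomputable def Lmun (nn : A → ℝ) (μ : C(X, A) →L[ℂ] ℂ) (a : C(X, A)) : ℝ≥0∞ :=
  max (lipn nn a) (ENNReal.ofReal ‖a - μ a • (1 : C(X, A))‖)

end Defs

/-- A state on a unital C*-algebra: a continuous linear functional sending `1` to `1`
and `star b * b` to a nonnegative real for every `b`. -/
def IsState {B : Type*} [NormedRing B] [NormedAlgebra ℂ B] [StarRing B]
    (φ : B →L[ℂ] ℂ) : Prop :=
  φ 1 = 1 ∧ ∀ b : B, 0 ≤ (φ (star b * b)).re ∧ (φ (star b * b)).im = 0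

/-- A pure state: an extreme point of the state space. -/
def IsPureState {B : Type*} [NormedRing B] [NormedAlgebra ℂ B] [StarRing B]
    (φ : B →L[ℂ] ℂ) : Prop :=
  φ ∈ Set.extremePoints ℝ { ψ : B →L[ℂ] ℂ | IsState ψ }

/-- The Monge–Kantorovich distance associated to a `[0,∞]`-valued seminorm `L`. -/
noncomputable def mkDist {B : Type*} [NormedRing B] [NormedAlgebra ℂ B] [StarRing B]
    (L : B → ℝ≥0∞) (φ ψ : B →L[ℂ] ℂ) : ℝ≥0∞ :=
  ⨆ (a : B) (_ : IsSelfAdjoint a ∧ L a ≤ 1), ENNReal.ofReal ‖φ a - ψ a‖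


open scoped Matrix.Norms.L2Operator

section MatrixDefs

variable {n : ℕ} {m : Fin (n + 1) → ℕ}

/-- The matrix unit `e_{k,(p,q)}` of `⊕_k M_{m_k}(ℂ)`. -/
noncomputable def matUnit (k : Fin (n + 1)) (p q : Fin (m k)) :
    Π j : Fin (n + 1), Matrix (Fin (m j)) (Fin (m j)) ℂ :=
  Pi.single k (Matrix.single p q 1)

/-- The constant `k_μ = Σ_k Σ_{p,q} |μ(e_{k,(p,q)})|` associated to a state `μ`. -/
noncomputable def kConst
    (μ : (Π j : Fin (n + 1), Matrix (Fin (m j)) (Fin (m j)) ℂ) →L[ℂ] ℂ) : ℝ :=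
  ∑ k : Fin (n + 1), ∑ p : Fin (m k), ∑ q : Fin (m k), ‖μ (matUnit k p q)‖

/-- The functional `μ_x : a ↦ μ (a x)` on `C(X, ⊕_k M_{m_k}(ℂ))`. -/
noncomputable def stateAt {X : Type*} [MetricSpace X] [CompactSpace X]
    (μ : (Π j : Fin (n + 1), Matrix (Fin (m j)) (Fin (m j)) ℂ) →L[ℂ] ℂ) (x : X) :
    C(X, Π j : Fin (n + 1), Matrix (Fin (m j)) (Fin (m j)) ℂ) →L[ℂ] ℂ :=
  μ.comp (ContinuousMap.evalCLM ℂ x)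

/-- The tracial state `tr_v = ⊕_k v_k tr_{m_k}` on `⊕_k M_{m_k}(ℂ)`. -/
noncomputable def trV (v : Fin (n + 1) → ℝ) :
    (Π j : Fin (n + 1), Matrix (Fin (m j)) (Fin (m j)) ℂ) →L[ℂ] ℂ :=
  LinearMap.toContinuousLinearMap
    { toFun := fun a => ∑ k : Fin (n + 1), ((v k : ℂ) / (m k : ℂ)) * (a k).trace
      map_add' := by
        intro a b
        simp [Matrix.trace_add, mul_add, Finset.sum_add_distrib]
      map_smul' := by
        intro c a
        simp only [Pi.smul_apply, Matrix.trace_smul, smul_eq_mul, RingHom.id_apply,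
          Finset.mul_sum]
        exact Finset.sum_congr rfl fun k _ => by ring }

end MatrixDefs


section Aux

open scoped Matrix.Norms.L2Operator

lemma aux_coord {d : ℕ} (v : EuclideanSpace ℂ (Fin d)) (p : Fin d) : ‖v p‖ ≤ ‖v‖ := by
  rw [EuclideanSpace.norm_eq]
  rw [show ‖v p‖ = Real.sqrt (‖v p‖ ^ 2) from (Real.sqrt_sq (norm_nonneg _)).symm]
  exact Real.sqrt_le_sqrt (Finset.single_le_sum (fun i _ => sq_nonneg ‖v i‖) (Finset.mem_univ p))

lemma aux_entry {d e : ℕ} (b : Matrix (Fin d) (Fin e) ℂ) (p : Fin d) (q : Fin e) :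
    ‖b p q‖ ≤ ‖b‖ := by
  have h := b.l2_opNorm_mulVec (EuclideanSpace.single q 1)
  rw [EuclideanSpace.norm_single, norm_one, mul_one] at h
  refine le_trans (le_trans ?_
    (aux_coord ((EuclideanSpace.equiv (Fin d) ℂ).symm (b.mulVec (EuclideanSpace.single q 1))) p)) h
  have hv : ((EuclideanSpace.equiv (Fin d) ℂ).symm (b.mulVec (EuclideanSpace.single q 1))) p
      = b p q := by
    show b.mulVec (Pi.single q 1) p = b p q
    simp [Matrix.mulVec_single]
  rw [hv]

lemma aux_trace {d : ℕ} (b : Matrix (Fin d) (Fin d) ℂ) : ‖b.trace‖ ≤ d * ‖b‖ := by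
  calc ‖b.trace‖ ≤ ∑ i : Fin d, ‖b i i‖ := norm_sum_le _ _
    _ ≤ ∑ _i : Fin d, ‖b‖ := Finset.sum_le_sum fun i _ => aux_entry b i i
    _ = d * ‖b‖ := by simp

variable {n : ℕ} {m : Fin (n + 1) → ℕ}

lemma aux_trV_apply (v : Fin (n + 1) → ℝ)
    (a : Π j : Fin (n + 1), Matrix (Fin (m j)) (Fin (m j)) ℂ) :
    trV v a = ∑ k : Fin (n + 1), ((v k : ℂ) / (m k : ℂ)) * (a k).trace := rfl

lemma aux_trV_norm_le (hm : ∀ k, 0 < m k) (v : Fin (n + 1) → ℝ)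
    (hv : ∀ k, 0 ≤ v k) (hv1 : ∑ k, v k = 1)
    (a : Π j : Fin (n + 1), Matrix (Fin (m j)) (Fin (m j)) ℂ) :
    ‖trV v a‖ ≤ ‖a‖ := by
  rw [aux_trV_apply]
  calc ‖∑ k : Fin (n + 1), ((v k : ℂ) / (m k : ℂ)) * (a k).trace‖
      ≤ ∑ k : Fin (n + 1), ‖((v k : ℂ) / (m k : ℂ)) * (a k).trace‖ := norm_sum_le _ _
    _ ≤ ∑ k : Fin (n + 1), v k * ‖a‖ := by
        refine Finset.sum_le_sum fun k _ => ?_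
        rw [norm_mul]
        have h1 : ‖((v k : ℂ) / (m k : ℂ))‖ = v k / m k := by
          rw [show ((v k : ℂ) / (m k : ℂ)) = ((v k / m k : ℝ) : ℂ) by push_cast; ring,
            Complex.norm_real, Real.norm_eq_abs, abs_of_nonneg]
          exact div_nonneg (hv k) (Nat.cast_nonneg _)
        rw [h1]
        have h2 : ‖(a k).trace‖ ≤ (m k : ℝ) * ‖a k‖ := aux_trace _
        have h3 : ‖a k‖ ≤ ‖a‖ := norm_le_pi_norm a k
        have hmk : (0 : ℝ) < m k := by exact_mod_cast hm k
        calc v k / m k * ‖(a k).trace‖ ≤ v k / m k * ((m k : ℝ) * ‖a‖) := by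
              refine mul_le_mul_of_nonneg_left ?_ (div_nonneg (hv k) (Nat.cast_nonneg _))
              exact h2.trans (mul_le_mul_of_nonneg_left h3 (Nat.cast_nonneg _))
          _ = v k * ‖a‖ := by
              field_simp
    _ = ‖a‖ := by rw [← Finset.sum_mul, hv1, one_mul]

lemma aux_trV_one (hm : ∀ k, 0 < m k) (v : Fin (n + 1) → ℝ) (hv1 : ∑ k, v k = 1) :
    trV v (1 : Π j : Fin (n + 1), Matrix (Fin (m j)) (Fin (m j)) ℂ) = 1 := by
  rw [aux_trV_apply]
  have : ∀ k : Fin (n + 1),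
      ((v k : ℂ) / (m k : ℂ)) * ((1 : Π j : Fin (n + 1), Matrix (Fin (m j)) (Fin (m j)) ℂ) k).trace
        = (v k : ℂ) := by
    intro k
    have hmk : ((m k : ℂ)) ≠ 0 := by
      exact_mod_cast Nat.cast_ne_zero.mpr (hm k).ne'
    rw [show ((1 : Π j : Fin (n + 1), Matrix (Fin (m j)) (Fin (m j)) ℂ) k) = 1 from rfl]
    rw [Matrix.trace_one, Fintype.card_fin]
    field_simp
  rw [Finset.sum_congr rfl fun k _ => this k]
  exact_mod_cast congrArg (Complex.ofReal) hv1

lemma aux_norm_one (hm : ∀ k, 0 < m k) :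
    ‖(1 : Π j : Fin (n + 1), Matrix (Fin (m j)) (Fin (m j)) ℂ)‖ = 1 := by
  haveI : ∀ j : Fin (n + 1), Nontrivial (Matrix (Fin (m j)) (Fin (m j)) ℂ) := by
    intro j
    haveI : Nonempty (Fin (m j)) := ⟨⟨0, hm j⟩⟩
    infer_instance
  have hone : ∀ j : Fin (n + 1), ‖(1 : Matrix (Fin (m j)) (Fin (m j)) ℂ)‖ = 1 := by
    intro j
    exact CStarRing.norm_one
  refine le_antisymm ?_ ?_
  · refine (pi_norm_le_iff_of_nonneg zero_le_one).mpr fun j => ?_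
    rw [show (1 : Π j : Fin (n + 1), Matrix (Fin (m j)) (Fin (m j)) ℂ) j = 1 from rfl, hone j]
  · have := norm_le_pi_norm (1 : Π j : Fin (n + 1), Matrix (Fin (m j)) (Fin (m j)) ℂ) 0
    rw [show (1 : Π j : Fin (n + 1), Matrix (Fin (m j)) (Fin (m j)) ℂ) 0 = 1 from rfl,
      hone 0] at this
    exact this

end Aux

/-- bi-Lipschitz bounds for `x ↦ (tr_v)_x` with respect to the
Monge–Kantorovich metric of `L^{(n),ℂ}`, with lower constant depending on
`M·diam(X)`. -/
theorem statement17
    (X : Type*) [MetricSpace X] [CompactSpace X]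
    (n : ℕ) (m : Fin (n + 1) → ℕ) (hm : ∀ k, 0 < m k)
    (nn : (Π j : Fin (n + 1), Matrix (Fin (m j)) (Fin (m j)) ℂ) → ℝ)
    (hnn : IsNormOn _ nn) (M N : ℝ) (hM : 0 < M) (hN : 0 < N)
    (hMN : ∀ a, M * nn a ≤ ‖a‖ ∧ ‖a‖ ≤ N * nn a)
    (v : Fin (n + 1) → ℝ) (hv : ∀ k, 0 ≤ v k ∧ v k ≤ 1) (hv1 : ∑ k, v k = 1) :
    (M * Metric.diam (Set.univ : Set X) ≤ 1 →
      ∀ x y : X,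
        ENNReal.ofReal (M * dist x y)
            ≤ mkDist (LCn nn) (stateAt (trV v) x) (stateAt (trV v) y) ∧
        mkDist (LCn nn) (stateAt (trV v) x) (stateAt (trV v) y)
            ≤ ENNReal.ofReal (N * dist x y)) ∧
    (1 < M * Metric.diam (Set.univ : Set X) →
      ∀ x y : X,
        ENNReal.ofReal ((1 / Metric.diam (Set.univ : Set X)) * dist x y)
            ≤ mkDist (LCn nn) (stateAt (trV v) x) (stateAt (trV v) y) ∧
        mkDist (LCn nn) (stateAt (trV v) x) (stateAt (trV v) y)
            ≤ ENNReal.ofReal (N * dist x y)) := by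
  classical
  have hone : ‖(1 : Π j : Fin (n + 1), Matrix (Fin (m j)) (Fin (m j)) ℂ)‖ = 1 := aux_norm_one hm
  have hnn1 : M * nn 1 ≤ 1 := by
    have := (hMN 1).1
    rwa [hone] at this
  -- Upper bound, common to both cases
  have hupper : ∀ x y : X,
      mkDist (LCn nn) (stateAt (trV v) x) (stateAt (trV v) y)
        ≤ ENNReal.ofReal (N * dist x y) := by
    intro x y
    refine iSup₂_le fun a h => ENNReal.ofReal_le_ofReal ?_
    by_cases hxy : x = y
    · subst hxy
      simp only [sub_self, norm_zero]
      positivity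
    · have hd : 0 < dist x y := dist_pos.mpr hxy
      have hlip : lipn nn a ≤ 1 := le_trans (le_max_left _ _) h.2
      have h1 : ENNReal.ofReal (nn (a x - a y) / dist x y) ≤ 1 := by
        refine le_trans ?_ hlip
        exact le_iSup₂ (f := fun (p : X × X) (_ : p.1 ≠ p.2) =>
          ENNReal.ofReal (nn (a p.1 - a p.2) / dist p.1 p.2)) (x, y) hxy
      rw [ENNReal.ofReal_le_one] at h1
      have h3 : nn (a x - a y) ≤ dist x y := (div_le_one hd).mp h1
      have h4 : ‖a x - a y‖ ≤ N * dist x y :=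
        (hMN _).2.trans (mul_le_mul_of_nonneg_left h3 hN.le)
      calc ‖stateAt (trV v) x a - stateAt (trV v) y a‖
          = ‖trV v (a x - a y)‖ := by
            rw [show stateAt (trV v) x a = trV v (a x) from rfl,
              show stateAt (trV v) y a = trV v (a y) from rfl, ← map_sub]
        _ ≤ ‖a x - a y‖ := aux_trV_norm_le hm v (fun k => (hv k).1) hv1 _
        _ ≤ N * dist x y := h4
  -- Lower bound, parametrized by the Lipschitz constant `M'`
  have hlow : ∀ M' : ℝ, 0 ≤ M' → M' * nn 1 ≤ 1 →
      M' * Metric.diam (Set.univ : Set X) ≤ 2 → ∀ x y : X,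
      ENNReal.ofReal (M' * dist x y)
        ≤ mkDist (LCn nn) (stateAt (trV v) x) (stateAt (trV v) y) := by
    intro M' hM'0 h1 h2 x y
    set D := Metric.diam (Set.univ : Set X) with hD
    have hD0 : 0 ≤ D := Metric.diam_nonneg
    set g : X → ℝ := fun z => M' * dist z y with hg
    have hgc : Continuous fun z : X => ((g z : ℝ) : ℂ) •
        (1 : Π j : Fin (n + 1), Matrix (Fin (m j)) (Fin (m j)) ℂ) := by
      refine Continuous.smul (f := fun z : X => ((g z : ℝ) : ℂ)) ?_ continuous_const
      exact Complex.continuous_ofReal.comp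
        (continuous_const.mul (continuous_id.dist continuous_const))
    set a : C(X, Π j : Fin (n + 1), Matrix (Fin (m j)) (Fin (m j)) ℂ) := ⟨_, hgc⟩ with ha
    have ha_apply : ∀ z : X, a z = ((g z : ℝ) : ℂ) • 1 := fun z => rfl
    have ha_sa : IsSelfAdjoint a := by
      refine ContinuousMap.ext fun z => ?_
      show star (a z) = a z
      rw [ha_apply, star_smul, star_one, Complex.star_def, Complex.conj_ofReal]
    have hdiam : ∀ z : X, dist z y ≤ D :=
      fun z => Metric.dist_le_diam_of_mem isCompact_univ.isBounded
        (Set.mem_univ _) (Set.mem_univ _)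
    have hlip : lipn nn a ≤ 1 := by
      refine iSup₂_le fun p hp => ?_
      rw [ENNReal.ofReal_le_one]
      have hd : 0 < dist p.1 p.2 := dist_pos.mpr hp
      have key : a p.1 - a p.2 = ((g p.1 - g p.2 : ℝ) : ℂ) • 1 := by
        rw [ha_apply, ha_apply]
        push_cast
        rw [sub_smul]
      rw [key, hnn.2.2.2]
      have habs : |g p.1 - g p.2| ≤ M' * dist p.1 p.2 := by
        rw [show g p.1 - g p.2 = M' * (dist p.1 y - dist p.2 y) by rw [hg]; ring,
          abs_mul, abs_of_nonneg hM'0]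
        exact mul_le_mul_of_nonneg_left (abs_dist_sub_le p.1 p.2 y) hM'0
      refine div_le_one_of_le₀ ?_ hd.le
      calc |g p.1 - g p.2| * nn 1 ≤ (M' * dist p.1 p.2) * nn 1 :=
            mul_le_mul_of_nonneg_right habs (hnn.1 1)
        _ = (M' * nn 1) * dist p.1 p.2 := by ring
        _ ≤ 1 * dist p.1 p.2 := mul_le_mul_of_nonneg_right h1 dist_nonneg
        _ = dist p.1 p.2 := one_mul _
    have hquot : quotC a ≤ 1 := by
      refine (ciInf_le ⟨0, ?_⟩ ((M' * D / 2 : ℝ) : ℂ)).trans ?_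
      · rintro r ⟨c, rfl⟩
        exact norm_nonneg _
      · refine (ContinuousMap.norm_le _ zero_le_one).mpr fun z => ?_
        have hz : (a - ((M' * D / 2 : ℝ) : ℂ) • (1 : C(X, Π j : Fin (n + 1), Matrix (Fin (m j)) (Fin (m j)) ℂ))) z
            = ((g z - M' * D / 2 : ℝ) : ℂ) • 1 := by
          show a z - ((M' * D / 2 : ℝ) : ℂ) • 1 = _
          rw [ha_apply]
          push_cast
          rw [sub_smul]
        rw [hz, norm_smul, hone, mul_one, Complex.norm_real, Real.norm_eq_abs]
        have hgz0 : 0 ≤ g z := mul_nonneg hM'0 dist_nonneg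
        have hgzD : g z ≤ M' * D := mul_le_mul_of_nonneg_left (hdiam z) hM'0
        have : |g z - M' * D / 2| ≤ M' * D / 2 := abs_le.mpr ⟨by linarith, by linarith⟩
        linarith
    have hL : LCn nn a ≤ 1 := max_le hlip (ENNReal.ofReal_le_one.mpr hquot)
    have hval : ‖stateAt (trV v) x a - stateAt (trV v) y a‖ = M' * dist x y := by
      rw [show stateAt (trV v) x a = trV v (a x) from rfl,
        show stateAt (trV v) y a = trV v (a y) from rfl]
      have hay : a y = ((0 : ℝ) : ℂ) • 1 := by
        rw [ha_apply, hg]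
        simp
      rw [ha_apply, hay, map_smul, map_smul, aux_trV_one hm v hv1, smul_eq_mul, smul_eq_mul,
        mul_one, mul_one, Complex.ofReal_zero, sub_zero, Complex.norm_real, Real.norm_eq_abs,
        abs_of_nonneg (mul_nonneg hM'0 dist_nonneg)]
    calc ENNReal.ofReal (M' * dist x y)
        = ENNReal.ofReal ‖stateAt (trV v) x a - stateAt (trV v) y a‖ := by rw [hval]
      _ ≤ _ := le_iSup₂ (f := fun (b : C(X, Π j : Fin (n + 1), Matrix (Fin (m j)) (Fin (m j)) ℂ))
          (_ : IsSelfAdjoint b ∧ LCn nn b ≤ 1) =>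
          ENNReal.ofReal ‖stateAt (trV v) x b - stateAt (trV v) y b‖) a ⟨ha_sa, hL⟩
  refine ⟨fun hMd x y => ⟨?_, hupper x y⟩, fun hMd x y => ⟨?_, hupper x y⟩⟩
  · exact hlow M hM.le hnn1 (by linarith) x y
  · have hD0 : 0 ≤ Metric.diam (Set.univ : Set X) := Metric.diam_nonneg
    have hDpos : 0 < Metric.diam (Set.univ : Set X) := by nlinarith
    refine hlow (1 / Metric.diam (Set.univ : Set X)) (by positivity) ?_ ?_ x y
    · have hnnD : nn 1 ≤ Metric.diam (Set.univ : Set X) := by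
        have h := (mul_lt_mul_iff_right₀ hM).mp (lt_of_le_of_lt hnn1 hMd)
        exact h.le
      rw [div_mul_eq_mul_div, one_mul, div_le_one hDpos]
      exact hnnD
    · rw [div_mul_eq_mul_div, one_mul, div_self hDpos.ne']
      norm_num
end

section
/- Let (X, d_X) be a compact metric space and A = ⊕_{k=0}^n M_{m_k}(ℂ), and let tr_v be the tracial state associated to v = (v_0,…,v_n) with v_k ∈ [0,1] and Σ v_k = 1. With ‖·‖_𝗇 taken to be the C*-norm ‖·‖_A, the map x ↦ (tr_v)_x is an isometry from (X, d_X) into the state space of C(X,A) equipped with the Monge–Kantorovich metric of L^{(A),C(X)}: for all x, y ∈ X, mk_{L^{(A),C(X)}}((tr_v)_x, (tr_v)_y) = d_X(x,y). -/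
open scoped ENNReal
set_option synthInstance.maxHeartbeats 1000000
set_option maxHeartbeats 1000000

open scoped Matrix.Norms.L2Operator

section Aux
open scoped Matrix.Norms.L2Operator

private theorem entryLe {m : ℕ} (M : Matrix (Fin m) (Fin m) ℂ) (i : Fin m) : ‖M i i‖ ≤ ‖M‖ := by
  classical
  set e : EuclideanSpace ℂ (Fin m) := EuclideanSpace.single i (1:ℂ)
  set w := (Matrix.toEuclideanCLM (n := Fin m) (𝕜 := ℂ) M) e with hw
  have h1 : M i i = inner ℂ e w := by
    rw [EuclideanSpace.inner_single_left]
    have := Matrix.ofLp_toEuclideanCLM (n := Fin m) (𝕜 := ℂ) M e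
    have h2 : w i = (M.mulVec (WithLp.ofLp e)) i := by
      rw [hw, ← this]
    rw [h2]
    simp [e, Matrix.mulVec_single]
  rw [h1]
  calc ‖(inner ℂ e w : ℂ)‖ ≤ ‖e‖ * ‖w‖ := norm_inner_le_norm e w
    _ ≤ 1 * (‖M‖ * ‖e‖) := by
        refine mul_le_mul (by simp [e]) ?_ (norm_nonneg _) zero_le_one
        rw [Matrix.cstar_norm_def]
        exact ContinuousLinearMap.le_opNorm _ _
    _ = ‖M‖ := by simp [e]

private theorem traceLe {m : ℕ} (M : Matrix (Fin m) (Fin m) ℂ) : ‖M.trace‖ ≤ m * ‖M‖ := by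
  rw [Matrix.trace]
  calc ‖∑ i, M.diag i‖ ≤ ∑ i : Fin m, ‖M i i‖ := norm_sum_le _ _
    _ ≤ ∑ _i : Fin m, ‖M‖ := Finset.sum_le_sum fun i _ => entryLe M i
    _ = m * ‖M‖ := by simp [mul_comm]

private theorem matrixNormOne {m : ℕ} (hm : 0 < m) : ‖(1 : Matrix (Fin m) (Fin m) ℂ)‖ = 1 := by
  haveI : Nonempty (Fin m) := Fin.pos_iff_nonempty.mp hm
  rw [Matrix.cstar_norm_def, map_one]
  exact norm_one

private theorem piNormOne {n : ℕ} {m : Fin (n+1) → ℕ} (hm : ∀ k, 0 < m k) :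
    ‖(1 : Π j : Fin (n+1), Matrix (Fin (m j)) (Fin (m j)) ℂ)‖ = 1 := by
  apply le_antisymm
  · exact pi_norm_le_iff_of_nonneg zero_le_one |>.mpr fun k => le_of_eq (matrixNormOne (hm k))
  · calc (1:ℝ) = ‖(1 : Matrix (Fin (m 0)) (Fin (m 0)) ℂ)‖ := (matrixNormOne (hm 0)).symm
      _ ≤ _ := norm_le_pi_norm (1 : Π j : Fin (n+1), Matrix (Fin (m j)) (Fin (m j)) ℂ) 0

variable {n : ℕ} {m : Fin (n + 1) → ℕ}

private theorem trV_apply' (v : Fin (n+1) → ℝ)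
    (a : Π j : Fin (n + 1), Matrix (Fin (m j)) (Fin (m j)) ℂ) :
    trV v a = ∑ k : Fin (n + 1), ((v k : ℂ) / (m k : ℂ)) * (a k).trace := rfl

private theorem trV_one (hm : ∀ k, 0 < m k) (v : Fin (n+1) → ℝ) (hv1 : ∑ k, v k = 1) :
    trV (m := m) v 1 = 1 := by
  rw [trV_apply']
  simp only [Pi.one_apply]
  have : ∀ k : Fin (n+1),
      ((v k : ℂ) / (m k : ℂ)) * ((1 : Matrix (Fin (m k)) (Fin (m k)) ℂ)).trace = (v k : ℂ) := by
    intro k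
    rw [Matrix.trace_one]
    have hk : ((m k : ℂ)) ≠ 0 := Nat.cast_ne_zero.mpr (hm k).ne'
    field_simp
    simp
  rw [Finset.sum_congr rfl fun k _ => this k, ← Complex.ofReal_sum]
  norm_cast

private theorem trV_norm_le (hm : ∀ k, 0 < m k) (v : Fin (n+1) → ℝ)
    (hv : ∀ k, 0 ≤ v k ∧ v k ≤ 1) (hv1 : ∑ k, v k = 1)
    (a : Π j : Fin (n + 1), Matrix (Fin (m j)) (Fin (m j)) ℂ) :
    ‖trV v a‖ ≤ ‖a‖ := by
  rw [trV_apply']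
  calc ‖∑ k : Fin (n+1), ((v k : ℂ) / (m k : ℂ)) * (a k).trace‖
      ≤ ∑ k : Fin (n+1), ‖((v k : ℂ) / (m k : ℂ)) * (a k).trace‖ := norm_sum_le _ _
    _ ≤ ∑ k : Fin (n+1), v k * ‖a‖ := by
        refine Finset.sum_le_sum fun k _ => ?_
        rw [norm_mul]
        have h1 : ‖((v k : ℂ) / (m k : ℂ))‖ = v k / m k := by
          rw [norm_div]
          simp [Complex.norm_real, abs_of_nonneg (hv k).1]
        rw [h1]
        calc (v k / m k) * ‖(a k).trace‖ ≤ (v k / m k) * (m k * ‖a k‖) := by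
              refine mul_le_mul_of_nonneg_left (traceLe _) ?_
              exact div_nonneg (hv k).1 (Nat.cast_nonneg _)
          _ = v k * ‖a k‖ := by
              have hk : ((m k : ℝ)) ≠ 0 := Nat.cast_ne_zero.mpr (hm k).ne'
              field_simp
          _ ≤ v k * ‖a‖ := mul_le_mul_of_nonneg_left (norm_le_pi_norm a k) (hv k).1
    _ = ‖a‖ := by rw [← Finset.sum_mul, hv1, one_mul]

end Aux

/-- with the C*-norm itself as the norm `nn`, the map `x ↦ (tr_v)_x`
is an isometry from `(X, d_X)` into the state space of `C(X, ⊕_k M_{m_k}(ℂ))`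
equipped with the Monge–Kantorovich metric of `L^{(A),C(X)}`. -/
theorem statement18
    (X : Type*) [MetricSpace X] [CompactSpace X]
    (n : ℕ) (m : Fin (n + 1) → ℕ) (hm : ∀ k, 0 < m k)
    (v : Fin (n + 1) → ℝ) (hv : ∀ k, 0 ≤ v k ∧ v k ≤ 1) (hv1 : ∑ k, v k = 1) :
    ∀ x y : X,
      mkDist
          (LCXn (fun a : Π j : Fin (n + 1), Matrix (Fin (m j)) (Fin (m j)) ℂ => ‖a‖))
          (stateAt (trV v) x) (stateAt (trV v) y)
        = ENNReal.ofReal (dist x y) := by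
  intro x y
  classical
  have hb : ∀ (a : C(X, Π j : Fin (n + 1), Matrix (Fin (m j)) (Fin (m j)) ℂ)) (x' : X),
      stateAt (trV v) x' a = trV v (a x') := fun a x' => rfl
  apply le_antisymm
  · refine iSup_le fun a => iSup_le fun h => ?_
    obtain ⟨hsa, hL⟩ := h
    by_cases hxy : x = y
    · subst hxy; simp
    · have hd : 0 < dist x y := dist_pos.mpr hxy
      have hlip : lipn (fun a : Π j : Fin (n + 1),
          Matrix (Fin (m j)) (Fin (m j)) ℂ => ‖a‖) a ≤ 1 :=
        le_trans (le_max_left _ _) hL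
      have h1 : ENNReal.ofReal (‖a x - a y‖ / dist x y) ≤ 1 := by
        refine le_trans ?_ hlip
        exact le_iSup₂ (f := fun (p : X × X) (_ : p.1 ≠ p.2) =>
          ENNReal.ofReal (‖a p.1 - a p.2‖ / dist p.1 p.2)) ((x, y) : X × X) hxy
      have h2 : ‖a x - a y‖ ≤ dist x y := by
        rw [ENNReal.ofReal_le_one] at h1
        exact (div_le_one hd).mp h1
      refine ENNReal.ofReal_le_ofReal ?_
      calc ‖(stateAt (trV v) x) a - (stateAt (trV v) y) a‖
          = ‖trV v (a x - a y)‖ := by rw [hb a x, hb a y, ← map_sub]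
        _ ≤ ‖a x - a y‖ := trV_norm_le hm v hv hv1 _
        _ ≤ dist x y := h2
  · set A := Π j : Fin (n + 1), Matrix (Fin (m j)) (Fin (m j)) ℂ with hA
    set f : C(X, A) := ⟨fun x' => ((dist x' y : ℝ) : ℂ) • (1 : A),
      (Complex.continuous_ofReal.comp (continuous_id.dist continuous_const)).smul
        continuous_const⟩ with hf
    have hfapp : ∀ x' : X, f x' = ((dist x' y : ℝ) : ℂ) • (1 : A) := fun _ => rfl
    have hsa : IsSelfAdjoint f := by
      rw [IsSelfAdjoint]
      ext x'
      rw [ContinuousMap.star_apply, hfapp, star_smul, star_one, RCLike.star_def,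
        Complex.conj_ofReal]
    have hone : ‖(1 : A)‖ = 1 := piNormOne hm
    have hlip : lipn (fun a : A => ‖a‖) f ≤ 1 := by
      refine iSup₂_le fun p hp => ?_
      rw [ENNReal.ofReal_le_one]
      have hsub : f p.1 - f p.2 = (((dist p.1 y - dist p.2 y : ℝ)) : ℂ) • (1 : A) := by
        rw [hfapp, hfapp, Complex.ofReal_sub, sub_smul]
      rw [hsub]
      beta_reduce
      rw [norm_smul, hone, mul_one, div_le_one (dist_pos.mpr hp)]
      rw [Complex.norm_real, Real.norm_eq_abs]
      exact abs_dist_sub_le p.1 p.2 y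
    have hquot : quotCXA f ≤ 0 := by
      refine csInf_le ⟨0, fun r hr => ?_⟩ ?_
      · obtain ⟨b, -, hr⟩ := hr
        rw [hr]; exact norm_nonneg _
      · exact ⟨f, fun x' => ⟨((dist x' y : ℝ) : ℂ), hfapp x'⟩, by simp⟩
    have hL : LCXn (fun a : A => ‖a‖) f ≤ 1 := by
      rw [LCXn]
      exact max_le hlip (ENNReal.ofReal_le_one.mpr (le_trans hquot zero_le_one))
    have hfx : ∀ x' : X, trV v (f x') = ((dist x' y : ℝ) : ℂ) := by
      intro x'
      rw [hfapp, map_smul, trV_one hm v hv1, smul_eq_mul, mul_one]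
    have hval : ‖(stateAt (trV v) x) f - (stateAt (trV v) y) f‖ = dist x y := by
      rw [hb f x, hb f y, hfx, hfx, dist_self, Complex.ofReal_zero, sub_zero,
        Complex.norm_real, Real.norm_eq_abs, abs_of_nonneg dist_nonneg]
    calc ENNReal.ofReal (dist x y)
        = ENNReal.ofReal ‖(stateAt (trV v) x) f - (stateAt (trV v) y) f‖ := by rw [hval]
      _ ≤ _ := le_iSup₂ (f := fun (a : C(X, A))
          (_ : IsSelfAdjoint a ∧ LCXn (fun a : A => ‖a‖) a ≤ 1) =>
          ENNReal.ofReal ‖(stateAt (trV v) x) a - (stateAt (trV v) y) a‖) f ⟨hsa, hL⟩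
end
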